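/- For all integers n ≥ 2 and m ≥ 1, the path-width of the corona of the complete graphs K_n and K_m satisfies pw(K_n ∧ K_m) = n + max(0, m − ⌊n/2⌋) − 1. -/

import Mathlib

open SimpleGraph

/-- `X` is a path-decomposition of the graph `G`. -/
def IsPathDecomp {V : Type} {r : ℕ} (G : SimpleGraph V) (X : Fin r → Finset V) : Prop :=
  (∀ v : V, ∃ i, v ∈ X i) ∧
  (∀ v w : V, G.Adj v w → ∃ i, v ∈ X i ∧ w ∈ X i) ∧
  (∀ i j l : Fin r, i < j → j < l → ∀ x, x ∈ X i → x ∈ X l → x ∈ X j)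

/-- The path-width of `G`: the minimum over all path-decompositions of
(maximum bag size − 1). -/
noncomputable def pathwidth {V : Type} (G : SimpleGraph V) : ℕ :=
  sInf { k | ∃ (r : ℕ) (X : Fin r → Finset V),
    IsPathDecomp G X ∧ sSup (Set.range fun i => (X i).card) - 1 = k }

/-- `corona G₁ G₂` is the corona `G₁ ∧ G₂`: the disjoint union of one copy of `G₁` and
`|V(G₁)|` copies of `G₂`, where each vertex `a` of `G₁` is joined by an edge to every
vertex of the `a`-th copy of `G₂`. -/
def corona {V₁ V₂ : Type} (G₁ : SimpleGraph V₁) (G₂ : SimpleGraph V₂) :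
    SimpleGraph (V₁ ⊕ V₁ × V₂) where
  Adj x y :=
    match x, y with
    | .inl a, .inl b => G₁.Adj a b
    | .inl a, .inr p => a = p.1
    | .inr p, .inl a => a = p.1
    | .inr p, .inr q => p.1 = q.1 ∧ G₂.Adj p.2 q.2
  symm := by
    constructor
    rintro (a | a) (b | b) h <;> simp_all [SimpleGraph.adj_comm, eq_comm]
  loopless := by
    constructor
    rintro (a | a) h <;> simp_all


def inBag (n m p : ℕ) : Fin n ⊕ Fin n × Fin m → Prop
  | .inl a => (p ≤ n - n/2 ∧ (a:ℕ) ≤ p) ∨ (n - n/2 ≤ p ∧ p ≤ (a:ℕ) + 1)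
  | .inr q => ((q.1:ℕ) < n - n/2 ∧ p = (q.1:ℕ)) ∨ (n - n/2 ≤ (q.1:ℕ) ∧ p = (q.1:ℕ) + 1)

instance (n m p : ℕ) : ∀ x, Decidable (inBag n m p x)
  | .inl _ => inferInstanceAs (Decidable (_ ∨ _))
  | .inr _ => inferInstanceAs (Decidable (_ ∨ _))

lemma inBag_inl {n m p : ℕ} {a : Fin n} :
    inBag n m p (.inl a) ↔ (p ≤ n - n/2 ∧ (a:ℕ) ≤ p) ∨ (n - n/2 ≤ p ∧ p ≤ (a:ℕ) + 1) :=
  Iff.rfl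

lemma inBag_inr {n m p : ℕ} {q : Fin n × Fin m} :
    inBag n m p (.inr q) ↔
      ((q.1:ℕ) < n - n/2 ∧ p = (q.1:ℕ)) ∨ (n - n/2 ≤ (q.1:ℕ) ∧ p = (q.1:ℕ) + 1) :=
  Iff.rfl

/-- the copy position of copy `i` -/
def cpos (n i : ℕ) : ℕ := if i < n - n/2 then i else i + 1

lemma inBag_cpos {n m : ℕ} (q : Fin n × Fin m) : inBag n m (cpos n (q.1:ℕ)) (.inr q) := by
  rw [inBag_inr]; unfold cpos; split_ifs with hc
  · exact Or.inl ⟨hc, rfl⟩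
  · exact Or.inr ⟨by omega, rfl⟩

lemma inBag_cpos_inl {n m : ℕ} (a : Fin n) : inBag n m (cpos n (a:ℕ)) (.inl a) := by
  rw [inBag_inl]; unfold cpos; split_ifs with hc
  · exact Or.inl ⟨by omega, le_refl _⟩
  · exact Or.inr ⟨by omega, le_refl _⟩

lemma cpos_lt {n : ℕ} (i : Fin n) : cpos n (i:ℕ) < n + 1 := by
  have := i.isLt; unfold cpos; split_ifs <;> omega

lemma isPathDecomp_bags (n m : ℕ) (hn : 2 ≤ n) :
    IsPathDecomp (corona (⊤ : SimpleGraph (Fin n)) (⊤ : SimpleGraph (Fin m)))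
      (fun p : Fin (n+1) => Finset.univ.filter (inBag n m (p : ℕ))) := by
  classical
  refine ⟨?_, ?_, ?_⟩
  · rintro (a | q)
    · refine ⟨⟨n - n/2, by omega⟩, Finset.mem_filter.mpr ⟨Finset.mem_univ _, ?_⟩⟩
      have := a.isLt
      show inBag n m (n - n/2) (.inl a)
      rw [inBag_inl]; omega
    · exact ⟨⟨cpos n (q.1:ℕ), cpos_lt q.1⟩,
        Finset.mem_filter.mpr ⟨Finset.mem_univ _, inBag_cpos q⟩⟩
  · rintro (a | q) (b | p) hadj
    · have ha := a.isLt; have hb := b.isLt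
      refine ⟨⟨n - n/2, by omega⟩, Finset.mem_filter.mpr ⟨Finset.mem_univ _, ?_⟩,
        Finset.mem_filter.mpr ⟨Finset.mem_univ _, ?_⟩⟩
      · show inBag n m (n - n/2) (.inl a); rw [inBag_inl]; omega
      · show inBag n m (n - n/2) (.inl b); rw [inBag_inl]; omega
    · have hap : a = p.1 := hadj
      refine ⟨⟨cpos n (p.1:ℕ), cpos_lt p.1⟩,
        Finset.mem_filter.mpr ⟨Finset.mem_univ _, ?_⟩,
        Finset.mem_filter.mpr ⟨Finset.mem_univ _, inBag_cpos p⟩⟩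
      rw [hap]; exact inBag_cpos_inl p.1
    · have hap : b = q.1 := hadj
      refine ⟨⟨cpos n (q.1:ℕ), cpos_lt q.1⟩,
        Finset.mem_filter.mpr ⟨Finset.mem_univ _, inBag_cpos q⟩,
        Finset.mem_filter.mpr ⟨Finset.mem_univ _, ?_⟩⟩
      rw [hap]; exact inBag_cpos_inl q.1
    · have hqp : q.1 = p.1 := hadj.1
      refine ⟨⟨cpos n (q.1:ℕ), cpos_lt q.1⟩,
        Finset.mem_filter.mpr ⟨Finset.mem_univ _, inBag_cpos q⟩,
        Finset.mem_filter.mpr ⟨Finset.mem_univ _, ?_⟩⟩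
      rw [hqp]; exact inBag_cpos p
  · intro i j l hij hjl x hxi hxl
    have hij' : (i : ℕ) < j := hij
    have hjl' : (j : ℕ) < l := hjl
    rw [Finset.mem_filter] at hxi hxl
    refine Finset.mem_filter.mpr ⟨Finset.mem_univ _, ?_⟩
    have hxi := hxi.2; have hxl := hxl.2
    rcases x with a | q
    · rw [inBag_inl] at hxi hxl ⊢; omega
    · rw [inBag_inr] at hxi hxl ⊢; omega

lemma bag_card_le (n m : ℕ) (hn : 2 ≤ n) (p : Fin (n+1)) :
    (Finset.univ.filter (inBag n m (p : ℕ)) :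
      Finset (Fin n ⊕ Fin n × Fin m)).card ≤ n + (m - n/2) := by
  classical
  set F : Fin n ⊕ Fin n × Fin m → ℕ := Sum.elim Fin.val (fun q => n + (q.2:ℕ)) with hF
  have hp : (p:ℕ) ≤ n := by omega
  rcases lt_trichotomy (p:ℕ) (n - n/2) with hc | hc | hc
  · -- target : range (p+1) ∪ Ico n (n+m)
    have key := Finset.card_le_card_of_injOn F
      (t := Finset.range ((p:ℕ)+1) ∪ Finset.Ico n (n+m)) (s := Finset.univ.filter (inBag n m (p:ℕ)))
      ?_ ?_
    · have := Finset.card_union_le (Finset.range ((p:ℕ)+1)) (Finset.Ico n (n+m))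
      simp only [Finset.card_range, Nat.card_Ico] at this
      omega
    · rintro (a | q) hx
      · have ha := a.isLt
        have hx' := (Finset.mem_filter.mp hx).2
        rw [inBag_inl] at hx'
        simp only [hF, Sum.elim_inl, Finset.mem_coe, Finset.mem_union, Finset.mem_range, Finset.mem_Ico]
        omega
      · have hq := q.2.isLt
        simp only [hF, Sum.elim_inr, Finset.mem_coe, Finset.mem_union, Finset.mem_range, Finset.mem_Ico]
        omega
    · rintro (a | q) hx (b | q') hy hxy
      · simp only [hF, Sum.elim_inl] at hxy
        exact congrArg Sum.inl (Fin.ext hxy)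
      · have := a.isLt
        simp only [hF, Sum.elim_inl, Sum.elim_inr] at hxy
        omega
      · have := b.isLt
        simp only [hF, Sum.elim_inl, Sum.elim_inr] at hxy
        omega
      · simp only [hF, Sum.elim_inr, Nat.add_right_cancel_iff] at hxy
        have hx' := (Finset.mem_filter.mp hx).2
        have hy' := (Finset.mem_filter.mp hy).2
        rw [inBag_inr] at hx' hy'
        have h1 : (q.1:ℕ) = (q'.1:ℕ) := by omega
        exact congrArg Sum.inr (Prod.ext (Fin.ext h1) (Fin.ext (by omega)))
  · -- middle bag : no copies, target range n
    have key := Finset.card_le_card_of_injOn F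
      (t := Finset.range n) (s := Finset.univ.filter (inBag n m (p:ℕ))) ?_ ?_
    · simp only [Finset.card_range] at key; omega
    · rintro (a | q) hx
      · have ha := a.isLt
        simp only [hF, Sum.elim_inl, Finset.mem_coe, Finset.mem_range]; omega
      · exfalso
        have hx' := (Finset.mem_filter.mp hx).2
        rw [inBag_inr] at hx'
        omega
    · rintro (a | q) hx (b | q') hy hxy
      · simp only [hF, Sum.elim_inl] at hxy
        exact congrArg Sum.inl (Fin.ext hxy)
      · exfalso
        have hy' := (Finset.mem_filter.mp hy).2
        rw [inBag_inr] at hy'; omega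
      · exfalso
        have hx' := (Finset.mem_filter.mp hx).2
        rw [inBag_inr] at hx'; omega
      · exfalso
        have hx' := (Finset.mem_filter.mp hx).2
        rw [inBag_inr] at hx'; omega
  · -- target : Ico (p-1) (n+m)
    have key := Finset.card_le_card_of_injOn F
      (t := Finset.Ico ((p:ℕ)-1) (n+m)) (s := Finset.univ.filter (inBag n m (p:ℕ))) ?_ ?_
    · rw [Nat.card_Ico] at key; omega
    · rintro (a | q) hx
      · have ha := a.isLt
        have hx' := (Finset.mem_filter.mp hx).2
        rw [inBag_inl] at hx'
        simp only [hF, Sum.elim_inl, Finset.mem_coe, Finset.mem_Ico]; omega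
      · have hq := q.2.isLt
        simp only [hF, Sum.elim_inr, Finset.mem_coe, Finset.mem_Ico]; omega
    · rintro (a | q) hx (b | q') hy hxy
      · simp only [hF, Sum.elim_inl] at hxy
        exact congrArg Sum.inl (Fin.ext hxy)
      · have := a.isLt
        simp only [hF, Sum.elim_inl, Sum.elim_inr] at hxy; omega
      · have := b.isLt
        simp only [hF, Sum.elim_inl, Sum.elim_inr] at hxy; omega
      · simp only [hF, Sum.elim_inr, Nat.add_right_cancel_iff] at hxy
        have hx' := (Finset.mem_filter.mp hx).2
        have hy' := (Finset.mem_filter.mp hy).2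
        rw [inBag_inr] at hx' hy'
        have h1 : (q.1:ℕ) = (q'.1:ℕ) := by omega
        exact congrArg Sum.inr (Prod.ext (Fin.ext h1) (Fin.ext (by omega)))

section helpers
variable {V : Type} {r : ℕ} {G : SimpleGraph V} {X : Fin r → Finset V}

lemma betw (hpd : IsPathDecomp G X) {p q j : Fin r} (hpj : p ≤ j) (hjq : j ≤ q)
    {x : V} (hxp : x ∈ X p) (hxq : x ∈ X q) : x ∈ X j := by
  rcases eq_or_lt_of_le hpj with rfl | h1
  · exact hxp
  rcases eq_or_lt_of_le hjq with rfl | h2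
  · exact hxq
  exact hpd.2.2 p j q h1 h2 x hxp hxq

lemma exists_bag_clique [DecidableEq V] (hpd : IsPathDecomp G X)
    (S : Finset V) (hne : S.Nonempty)
    (hS : ∀ v ∈ S, ∀ w ∈ S, v ≠ w → G.Adj v w) : ∃ p, ∀ v ∈ S, v ∈ X p := by
  classical
  set I : V → Finset (Fin r) := fun v => Finset.univ.filter (fun p => v ∈ X p) with hIdef
  have hI : ∀ v, (I v).Nonempty := fun v => by
    obtain ⟨i, hi⟩ := hpd.1 v
    exact ⟨i, by simp [hIdef, hi]⟩
  have hImem : ∀ v p, p ∈ I v ↔ v ∈ X p := by intro v p; simp [hIdef]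
  obtain ⟨v₀, hv₀S, hmax⟩ := S.exists_max_image (fun v => (I v).min' (hI v)) hne
  refine ⟨(I v₀).min' (hI v₀), fun w hw => ?_⟩
  have h1 : (I w).min' (hI w) ≤ (I v₀).min' (hI v₀) := hmax w hw
  have h2 : (I v₀).min' (hI v₀) ≤ (I w).max' (hI w) := by
    by_cases hwv : w = v₀
    · subst hwv
      exact Finset.min'_le _ _ ((I w).max'_mem (hI w))
    · obtain ⟨k, hk1, hk2⟩ := hpd.2.1 v₀ w (hS v₀ hv₀S w hw (fun e => hwv e.symm))
      exact le_trans (Finset.min'_le _ k ((hImem v₀ k).mpr hk1))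
        (Finset.le_max' _ k ((hImem w k).mpr hk2))
  exact betw hpd h1 h2 ((hImem w _).mp ((I w).min'_mem (hI w)))
    ((hImem w _).mp ((I w).max'_mem (hI w)))

end helpers

lemma lower_bound (n m : ℕ) (hn : 2 ≤ n) (hm : 1 ≤ m) {r : ℕ}
    {X : Fin r → Finset (Fin n ⊕ Fin n × Fin m)}
    (hpd : IsPathDecomp (corona (⊤ : SimpleGraph (Fin n)) (⊤ : SimpleGraph (Fin m))) X) :
    ∃ p q, n ≤ (X p).card ∧ m + (n - n/2) ≤ (X q).card := by
  classical
  -- the apex clique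
  set SA : Finset (Fin n ⊕ Fin n × Fin m) := Finset.univ.image Sum.inl with hSA
  have hSAcard : SA.card = n := by
    rw [hSA, Finset.card_image_of_injective _ Sum.inl_injective]
    simp
  have hSAne : SA.Nonempty := by
    refine ⟨Sum.inl ⟨0, by omega⟩, ?_⟩
    simp [hSA]
  have hSAadj : ∀ v ∈ SA, ∀ w ∈ SA, v ≠ w →
      (corona (⊤ : SimpleGraph (Fin n)) (⊤ : SimpleGraph (Fin m))).Adj v w := by
    intro v hv w hw hvw
    rw [hSA, Finset.mem_image] at hv hw
    obtain ⟨a, -, rfl⟩ := hv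
    obtain ⟨b, -, rfl⟩ := hw
    exact fun e => hvw (by rw [e])
  obtain ⟨s, hs⟩ := exists_bag_clique hpd SA hSAne hSAadj
  -- the copy cliques
  set C : Fin n → Finset (Fin n ⊕ Fin n × Fin m) := fun i =>
    insert (Sum.inl i) (Finset.univ.image fun v : Fin m => (Sum.inr (i, v))) with hC
  have hCinj : ∀ i : Fin n, Function.Injective (fun v : Fin m => (Sum.inr (i, v) : Fin n ⊕ Fin n × Fin m)) :=
    fun i a b hab => by simpa [Prod.ext_iff] using hab
  have hCclique : ∀ i : Fin n, ∀ v ∈ C i, ∀ w ∈ C i, v ≠ w →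
      (corona (⊤ : SimpleGraph (Fin n)) (⊤ : SimpleGraph (Fin m))).Adj v w := by
    intro i v hv w hw hvw
    rw [hC, Finset.mem_insert, Finset.mem_image] at hv hw
    rcases hv with rfl | ⟨x, -, rfl⟩ <;> rcases hw with rfl | ⟨y, -, rfl⟩
    · exact absurd rfl hvw
    · exact rfl
    · exact rfl
    · exact ⟨rfl, fun e => hvw (congrArg (fun z => Sum.inr (i, z)) e)⟩
  have hT : ∀ i : Fin n, ∃ p, ∀ v ∈ C i, v ∈ X p := fun i =>
    exists_bag_clique hpd (C i) ⟨Sum.inl i, Finset.mem_insert_self _ _⟩ (hCclique i)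
  choose t ht using hT
  -- split the copies according to which side of `s` their bags lie
  set Ap : Finset (Fin n) := Finset.univ.filter (fun i => s ≤ t i) with hAp
  set Am : Finset (Fin n) := Finset.univ.filter (fun i => t i ≤ s) with hAm
  have hsplit : n ≤ Ap.card + Am.card := by
    have hu : Ap ∪ Am = Finset.univ := by
      ext i
      simp [hAp, hAm, le_total]
    have := Finset.card_union_le Ap Am
    rw [hu] at this
    simpa using this
  have hnn : 1 ≤ n - n/2 := by omega
  -- in either case we find a big bag
  have key : ∃ q, m + (n - n/2) ≤ (X q).card := by
    by_cases hA : n - n/2 ≤ Ap.card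
    · obtain ⟨i₀, hi₀A, hmin⟩ := Ap.exists_min_image t (Finset.card_pos.mp (by omega))
      have hsi₀ : s ≤ t i₀ := (Finset.mem_filter.mp hi₀A).2
      set B : Finset (Fin n ⊕ Fin n × Fin m) :=
        (Finset.univ.image fun v : Fin m => (Sum.inr (i₀, v))) ∪ Ap.image Sum.inl with hB
      have hBsub : B ⊆ X (t i₀) := by
        intro x hx
        rw [hB, Finset.mem_union, Finset.mem_image, Finset.mem_image] at hx
        rcases hx with ⟨v, -, rfl⟩ | ⟨i, hi, rfl⟩
        · exact ht i₀ _ (Finset.mem_insert_of_mem (Finset.mem_image_of_mem _ (Finset.mem_univ v)))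
        · have hiA : s ≤ t i := (Finset.mem_filter.mp hi).2
          exact betw hpd hsi₀ (hmin i hi)
            (hs _ (Finset.mem_image_of_mem _ (Finset.mem_univ i)))
            (ht i _ (Finset.mem_insert_self _ _))
      have hBcard : B.card = m + Ap.card := by
        rw [hB, Finset.card_union_of_disjoint, Finset.card_image_of_injective _ (hCinj i₀),
          Finset.card_image_of_injective _ Sum.inl_injective]
        · simp
        · rw [Finset.disjoint_left]
          rintro x hx hx'
          rw [Finset.mem_image] at hx hx'
          obtain ⟨v, -, rfl⟩ := hx
          obtain ⟨i, -, h⟩ := hx'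
          exact Sum.inl_ne_inr h
      refine ⟨t i₀, ?_⟩
      have := Finset.card_le_card hBsub
      omega
    · have hA' : n - n/2 ≤ Am.card := by omega
      obtain ⟨i₀, hi₀A, hmax⟩ := Am.exists_max_image t (Finset.card_pos.mp (by omega))
      have hsi₀ : t i₀ ≤ s := (Finset.mem_filter.mp hi₀A).2
      set B : Finset (Fin n ⊕ Fin n × Fin m) :=
        (Finset.univ.image fun v : Fin m => (Sum.inr (i₀, v))) ∪ Am.image Sum.inl with hB
      have hBsub : B ⊆ X (t i₀) := by
        intro x hx
        rw [hB, Finset.mem_union, Finset.mem_image, Finset.mem_image] at hx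
        rcases hx with ⟨v, -, rfl⟩ | ⟨i, hi, rfl⟩
        · exact ht i₀ _ (Finset.mem_insert_of_mem (Finset.mem_image_of_mem _ (Finset.mem_univ v)))
        · exact betw hpd (hmax i hi) hsi₀
            (ht i _ (Finset.mem_insert_self _ _))
            (hs _ (Finset.mem_image_of_mem _ (Finset.mem_univ i)))
      have hBcard : B.card = m + Am.card := by
        rw [hB, Finset.card_union_of_disjoint, Finset.card_image_of_injective _ (hCinj i₀),
          Finset.card_image_of_injective _ Sum.inl_injective]
        · simp
        · rw [Finset.disjoint_left]
          rintro x hx hx'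
          rw [Finset.mem_image] at hx hx'
          obtain ⟨v, -, rfl⟩ := hx
          obtain ⟨i, -, h⟩ := hx'
          exact Sum.inl_ne_inr h
      refine ⟨t i₀, ?_⟩
      have := Finset.card_le_card hBsub
      omega
  obtain ⟨q, hq⟩ := key
  refine ⟨s, q, ?_, hq⟩
  calc n = SA.card := hSAcard.symm
    _ ≤ (X s).card := Finset.card_le_card (fun v hv => hs v hv)

/-- For `n ≥ 2` and `m ≥ 1`, the path-width of the corona of complete graphs satisfies
`pw(K_n ∧ K_m) = n + max(0, m − ⌊n/2⌋) − 1`. -/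
theorem pathwidth_corona_complete (n m : ℕ) (hn : 2 ≤ n) (hm : 1 ≤ m) :
    pathwidth (corona (⊤ : SimpleGraph (Fin n)) (⊤ : SimpleGraph (Fin m))) =
      n + max 0 (m - n / 2) - 1 := by
  classical
  have hzm : max 0 (m - n / 2) = m - n / 2 := Nat.zero_max _
  rw [hzm]
  set X0 : Fin (n+1) → Finset (Fin n ⊕ Fin n × Fin m) :=
    fun p => Finset.univ.filter (inBag n m (p : ℕ)) with hX0
  have hpd0 := isPathDecomp_bags n m hn
  have hmem : sSup (Set.range fun i => (X0 i).card) - 1 ∈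
      { k | ∃ (r : ℕ) (X : Fin r → Finset (Fin n ⊕ Fin n × Fin m)),
        IsPathDecomp (corona (⊤ : SimpleGraph (Fin n)) (⊤ : SimpleGraph (Fin m))) X ∧
        sSup (Set.range fun i => (X i).card) - 1 = k } :=
    ⟨n+1, X0, hpd0, rfl⟩
  have hsup_le : sSup (Set.range fun i => (X0 i).card) ≤ n + (m - n/2) := by
    refine csSup_le ⟨(X0 0).card, ⟨0, rfl⟩⟩ ?_
    rintro k ⟨p, rfl⟩
    exact bag_card_le n m hn p
  have hlb : ∀ k ∈ { k | ∃ (r : ℕ) (X : Fin r → Finset (Fin n ⊕ Fin n × Fin m)),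
        IsPathDecomp (corona (⊤ : SimpleGraph (Fin n)) (⊤ : SimpleGraph (Fin m))) X ∧
        sSup (Set.range fun i => (X i).card) - 1 = k },
      n + (m - n/2) - 1 ≤ k := by
    rintro k ⟨r, X, hpd, rfl⟩
    obtain ⟨p, q, hp, hq⟩ := lower_bound n m hn hm hpd
    have hbdd : BddAbove (Set.range fun i => (X i).card) :=
      (Set.finite_range _).bddAbove
    have h1 : (X p).card ≤ sSup (Set.range fun i => (X i).card) :=
      le_csSup hbdd ⟨p, rfl⟩
    have h2 : (X q).card ≤ sSup (Set.range fun i => (X i).card) :=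
      le_csSup hbdd ⟨q, rfl⟩
    omega
  unfold pathwidth
  refine le_antisymm (le_trans (Nat.sInf_le hmem) ?_) (le_csInf ⟨_, hmem⟩ hlb)
  omega
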